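/- For every integer s ≥ 2 there exists a unique formal power series U over ℚ with constant coefficient 1 satisfying the functional equation U = 1 + X·U^s, and for every integer p ≥ 1 and every n ≥ 0 the coefficient of X^n in U^p equals the Raney number R_{s,p}(n) = (p/(s·n+p))·C(s·n+p, n), where C denotes the binomial coefficient. -/

import Mathlib

/-- Raney number `R_{s,p}(n) = (p/(s·n+p))·C(s·n+p, n)` as a rational number. -/
def raneyQ (s p n : ℕ) : ℚ :=
  (p : ℚ) / (s * n + p) * (Nat.choose (s * n + p) n : ℚ)

lemma raney_id (s p n : ℕ) (hs : 2 ≤ s) :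
    raneyQ s (p+1) (n+1) = raneyQ s p (n+1) + raneyQ s (p+s) n := by
  obtain ⟨t, rfl⟩ : ∃ t, s = t + 2 := ⟨s - 2, by omega⟩
  set m : ℕ := (t+2) * (n+1) + p with hm
  set d : ℕ := (t+1) * (n+1) + p with hd
  have hmd : m = d + (n+1) := by simp only [hm, hd]; ring
  have h1 : (t+2) * (n+1) + (p+1) = m + 1 := by simp only [hm]; omega
  have h2 : (t+2) * n + (p + (t+2)) = m := by simp only [hm]; ring
  have hnm : n + 1 ≤ m := by omega
  have hnm1 : n + 1 ≤ m + 1 := by omega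
  have hnm2 : n ≤ m := by omega
  have e1 : m + 1 - (n+1) = d + 1 := by omega
  have e2 : m - (n+1) = d := by omega
  have e3 : m - n = d + 1 := by omega
  unfold raneyQ
  rw [h1, h2, Nat.cast_choose ℚ hnm1, Nat.cast_choose ℚ hnm, Nat.cast_choose ℚ hnm2,
    e1, e2, e3, Nat.factorial_succ m, Nat.factorial_succ d, Nat.factorial_succ n]
  have hmQ : (m:ℚ) = ((t:ℚ)+2)*((n:ℚ)+1)+(p:ℚ) := by simp only [hm]; push_cast; ring
  have hdQ : (d:ℚ) = ((t:ℚ)+1)*((n:ℚ)+1)+(p:ℚ) := by simp only [hd]; push_cast; ring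
  have hnf : ((n.factorial : ℚ)) ≠ 0 := by exact_mod_cast n.factorial_pos.ne'
  have hdf : ((d.factorial : ℚ)) ≠ 0 := by exact_mod_cast d.factorial_pos.ne'
  have hmf : ((m.factorial : ℚ)) ≠ 0 := by exact_mod_cast m.factorial_pos.ne'
  push_cast
  rw [hmQ, hdQ]
  have A1 : ((t:ℚ)+2)*((n:ℚ)+1)+((p:ℚ)+1) ≠ 0 := by positivity
  have A2 : ((t:ℚ)+2)*((n:ℚ)+1)+(p:ℚ) ≠ 0 := by positivity
  have A3 : ((t:ℚ)+2)*(n:ℚ)+((p:ℚ)+((t:ℚ)+2)) ≠ 0 := by positivity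
  have A4 : ((t:ℚ)+1)*((n:ℚ)+1)+(p:ℚ)+1 ≠ 0 := by positivity
  have A5 : (n:ℚ)+1 ≠ 0 := by positivity
  field_simp
  ring

lemma raney_zero (s n : ℕ) : raneyQ s 0 (n+1) = 0 := by
  simp [raneyQ]

lemma raney_base (s p : ℕ) (hp : 1 ≤ p) : raneyQ s p 0 = 1 := by
  have : (p : ℚ) ≠ 0 := by exact_mod_cast Nat.one_le_iff_ne_zero.mp hp
  simp [raneyQ, div_self this]

noncomputable def fussCoeff (s : ℕ) : ℕ → ℚ
  | 0 => 1
  | n + 1 =>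
    PowerSeries.coeff n
      ((((Finset.range (n+1)).attach.sum
          (fun i => Polynomial.C (fussCoeff s i.1) * Polynomial.X ^ (i.1 : ℕ)) :
            Polynomial ℚ) : PowerSeries ℚ) ^ s)
  decreasing_by exact Finset.mem_range.mp i.2

lemma coeff_eq_coeff_trunc (n : ℕ) (f : PowerSeries ℚ) :
    PowerSeries.coeff n f = (PowerSeries.trunc (n+1) f).coeff n := by
  rw [PowerSeries.coeff_trunc]; simp

lemma coeff_pow_trunc (f : PowerSeries ℚ) (n k : ℕ) :
    PowerSeries.coeff n (((PowerSeries.trunc (n+1) f : Polynomial ℚ) : PowerSeries ℚ) ^ k)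
      = PowerSeries.coeff n (f ^ k) := by
  rw [coeff_eq_coeff_trunc, coeff_eq_coeff_trunc n (f ^ k), PowerSeries.trunc_trunc_pow]

lemma coeff_pow_congr (f g : PowerSeries ℚ) (n k : ℕ)
    (h : ∀ i ≤ n, PowerSeries.coeff i f = PowerSeries.coeff i g) :
    PowerSeries.coeff n (f ^ k) = PowerSeries.coeff n (g ^ k) := by
  have ht : PowerSeries.trunc (n+1) f = PowerSeries.trunc (n+1) g := by
    ext m
    rw [PowerSeries.coeff_trunc, PowerSeries.coeff_trunc]
    split
    · exact h m (by omega)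
    · rfl
  rw [← coeff_pow_trunc f, ← coeff_pow_trunc g, ht]

lemma trunc_mk_eq (s n : ℕ) :
    (Finset.range (n+1)).attach.sum
        (fun i => Polynomial.C (fussCoeff s i.1) * Polynomial.X ^ (i.1 : ℕ))
      = PowerSeries.trunc (n+1) (PowerSeries.mk (fussCoeff s)) := by
  rw [Finset.sum_attach _ (fun i => Polynomial.C (fussCoeff s i) * Polynomial.X ^ i)]
  ext m
  rw [PowerSeries.coeff_trunc]
  simp [Polynomial.coeff_X_pow, Finset.sum_ite_eq, PowerSeries.coeff_mk]

lemma fussCoeff_succ (s n : ℕ) :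
    fussCoeff s (n+1) = PowerSeries.coeff n ((PowerSeries.mk (fussCoeff s)) ^ s) := by
  rw [fussCoeff, trunc_mk_eq, coeff_pow_trunc]

lemma fuss_eq (s : ℕ) :
    PowerSeries.mk (fussCoeff s)
      = 1 + PowerSeries.X * (PowerSeries.mk (fussCoeff s)) ^ s := by
  ext n
  cases n with
  | zero => simp [fussCoeff]
  | succ n =>
    rw [map_add, PowerSeries.coeff_succ_X_mul, PowerSeries.coeff_mk, fussCoeff_succ]
    simp

theorem stmt0 (s : ℕ) (hs : 2 ≤ s) :
    (∃! U : PowerSeries ℚ,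
        PowerSeries.constantCoeff U = 1 ∧ U = 1 + PowerSeries.X * U ^ s) ∧
    ∀ U : PowerSeries ℚ,
      PowerSeries.constantCoeff U = 1 → U = 1 + PowerSeries.X * U ^ s →
      ∀ p : ℕ, 1 ≤ p → ∀ n : ℕ,
        PowerSeries.coeff n (U ^ p) = raneyQ s p n := by
  constructor
  · refine ⟨PowerSeries.mk (fussCoeff s), ⟨?_, fuss_eq s⟩, ?_⟩
    · show PowerSeries.constantCoeff _ = 1
      rw [← PowerSeries.coeff_zero_eq_constantCoeff]
      simp [fussCoeff]
    · rintro V ⟨hV1, hV2⟩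
      ext n
      induction n using Nat.strong_induction_on with
      | _ n ih =>
        match n with
        | 0 =>
          rw [PowerSeries.coeff_zero_eq_constantCoeff_apply,
            PowerSeries.coeff_zero_eq_constantCoeff_apply, hV1]
          simp [fussCoeff]
        | (n+1) =>
          have hVs : PowerSeries.coeff (n+1) V = PowerSeries.coeff n (V ^ s) := by
            nth_rewrite 1 [hV2]
            rw [map_add, PowerSeries.coeff_succ_X_mul]
            simp
          rw [hVs, PowerSeries.coeff_mk, fussCoeff_succ]
          exact coeff_pow_congr V _ n s (fun i hi => ih i (by omega))
  · intro U hU1 hU2 p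
    have hbase : ∀ q : ℕ, PowerSeries.coeff 0 (U ^ q) = 1 := by
      intro q
      rw [PowerSeries.coeff_zero_eq_constantCoeff_apply, map_pow, hU1, one_pow]
    have hrec : ∀ q n : ℕ,
        PowerSeries.coeff (n+1) (U ^ (q+1))
          = PowerSeries.coeff (n+1) (U ^ q) + PowerSeries.coeff n (U ^ (q+s)) := by
      intro q n
      have hU : U ^ (q+1) = U ^ q + PowerSeries.X * U ^ (q+s) := by
        have h0 : U ^ (q+1) = U ^ q * (1 + PowerSeries.X * U ^ s) := by
          rw [← hU2, pow_succ]
        rw [h0]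
        ring
      rw [hU, map_add, PowerSeries.coeff_succ_X_mul]
    have main : ∀ n : ℕ, ∀ q : ℕ, 1 ≤ q → PowerSeries.coeff n (U ^ q) = raneyQ s q n := by
      intro n
      induction n with
      | zero => intro q hq; rw [hbase, raney_base s q hq]
      | succ n ihn =>
        have H : ∀ q : ℕ, PowerSeries.coeff (n+1) (U ^ q) = raneyQ s q (n+1) := by
          intro q
          induction q with
          | zero => rw [pow_zero, raney_zero]; simp
          | succ q ihq =>
            rw [hrec q n, ihq]
            have h2 : PowerSeries.coeff n (U ^ (q+s)) = raneyQ s (q+s) n := by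
              cases n with
              | zero => rw [hbase, raney_base s (q+s) (by omega)]
              | succ n' => exact (fun q hq => ihn q hq) (q+s) (by omega)
            rw [h2, ← raney_id s q n hs]
        exact fun q _ => H q
    exact fun hp n => main n p hp
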